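/- arXiv:0902.2805 — 2 statements merged into one kernel-verified Lean document; each statement's English description precedes it below -/
import Mathlib

section
/- The minimum value of F satisfies 3.36093 < min_{c ∈ ℝ} F(c) < 3.36095. -/
open MeasureTheory Real Set

set_option maxHeartbeats 2000000

/-- The closed pentagon with vertices (-1,-1), (1,-1), (1,0), (0,1), (-1,1). -/
def P : Set (ℝ × ℝ) :=
  {p : ℝ × ℝ | -1 ≤ p.1 ∧ p.1 ≤ 1 ∧ -1 ≤ p.2 ∧ p.2 ≤ 1 ∧ p.1 + p.2 ≤ 1}

/-- `F c = ∫_P e^{-c(x₁+x₂)} dx₁ dx₂` (Lebesgue measure on ℝ²). -/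
noncomputable def F (c : ℝ) : ℝ := ∫ p in P, Real.exp (-c * (p.1 + p.2))

lemma isClosed_P : IsClosed P := by
  have h : P = {p : ℝ×ℝ | -1 ≤ p.1} ∩ ({p | p.1 ≤ 1} ∩ ({p | -1 ≤ p.2} ∩ ({p | p.2 ≤ 1} ∩ {p | p.1 + p.2 ≤ 1}))) := by
    ext p; simp only [P, Set.mem_setOf_eq, Set.mem_inter_iff]
  rw [h]
  exact (isClosed_le continuous_const continuous_fst).inter
    ((isClosed_le continuous_fst continuous_const).inter
    ((isClosed_le continuous_const continuous_snd).inter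
    ((isClosed_le continuous_snd continuous_const).inter
    (isClosed_le (continuous_fst.add continuous_snd) continuous_const))))

lemma isCompact_P : IsCompact P := by
  apply IsCompact.of_isClosed_subset (isCompact_Icc (a := ((-1:ℝ),(-1:ℝ))) (b := ((1:ℝ),(1:ℝ)))) isClosed_P
  rintro p ⟨h1,h2,h3,h4,h5⟩
  exact ⟨⟨h1,h3⟩,⟨h2,h4⟩⟩

lemma integrableOn_P (c : ℝ) : IntegrableOn (fun p : ℝ×ℝ => Real.exp (-c * (p.1 + p.2))) P := by
  apply ContinuousOn.integrableOn_compact isCompact_P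
  fun_prop

lemma int_exp (c : ℝ) (hc : c ≠ 0) (a b : ℝ) :
    ∫ x in a..b, Real.exp (-(c*x)) = (Real.exp (-(c*a)) - Real.exp (-(c*b)))/c := by
  have key : ∀ x ∈ Set.uIcc a b, HasDerivAt (fun t => -Real.exp (-(c*t))/c) (Real.exp (-(c*x))) x := by
    intro x _
    have h1 : HasDerivAt (fun t : ℝ => -(c*t)) (-c) x := by
      simpa using ((hasDerivAt_id x).const_mul c).fun_neg
    have h2 := (Real.hasDerivAt_exp (-(c*x))).comp x h1
    have h3 := (h2.div_const c).fun_neg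
    convert h3 using 1
    case e'_8 => funext t; simp [Function.comp]; ring
    case e'_9 => field_simp
    all_goals rfl
  rw [intervalIntegral.integral_eq_sub_of_hasDerivAt key ((Continuous.intervalIntegrable (by fun_prop) a b))]
  ring

lemma F_eq (c : ℝ) (hc : c ≠ 0) :
    F c = (Real.exp (2*c) - 2 + (1-c) * Real.exp (-c)) / c^2 := by
  classical
  set P1 : Set (ℝ×ℝ) := Set.Icc (-1:ℝ) 0 ×ˢ Set.Icc (-1:ℝ) 1 with hP1
  set P2 : Set (ℝ×ℝ) := {p : ℝ×ℝ | p.1 ∈ Set.Ioc (0:ℝ) 1 ∧ p.2 ∈ Set.Icc (-1:ℝ) (1 - p.1)} with hP2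
  have hP : P = P1 ∪ P2 := by
    ext p
    simp only [P, Set.mem_setOf_eq, Set.mem_union, hP1, hP2, Set.mem_prod, Set.mem_Icc, Set.mem_Ioc]
    constructor
    · rintro ⟨h1,h2,h3,h4,h5⟩
      rcases le_or_gt p.1 0 with h|h
      · left; exact ⟨⟨h1,h⟩,⟨h3,h4⟩⟩
      · right; exact ⟨⟨h,h2⟩,⟨h3, by linarith⟩⟩
    · rintro (⟨⟨h1,h2⟩,h3,h4⟩|⟨⟨h1,h2⟩,h3,h4⟩)
      · exact ⟨h1, by linarith, h3, h4, by linarith⟩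
      · exact ⟨by linarith, h2, h3, by linarith, by linarith⟩
  have hm2 : MeasurableSet P2 := by
    have h : P2 = ({p : ℝ×ℝ | 0 < p.1} ∩ {p | p.1 ≤ 1}) ∩ ({p | -1 ≤ p.2} ∩ {p | p.2 ≤ 1 - p.1}) := by
      ext p
      simp only [hP2, Set.mem_setOf_eq, Set.mem_Ioc, Set.mem_Icc, Set.mem_inter_iff]
    rw [h]
    exact ((measurableSet_lt measurable_const measurable_fst).inter
      (measurableSet_le measurable_fst measurable_const)).inter
      ((measurableSet_le measurable_const measurable_snd).inter
      (measurableSet_le measurable_snd (measurable_const.sub measurable_fst)))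
  have hd : Disjoint P1 P2 := by
    rw [Set.disjoint_left]
    rintro p ⟨⟨_,h2⟩,_⟩ ⟨⟨h3,_⟩,_⟩
    exact absurd (h3.trans_le h2) (lt_irrefl 0)
  have hi1 : IntegrableOn (fun p : ℝ×ℝ => Real.exp (-c * (p.1 + p.2))) P1 :=
    (integrableOn_P c).mono_set (by rw [hP]; exact Set.subset_union_left)
  have hi2 : IntegrableOn (fun p : ℝ×ℝ => Real.exp (-c * (p.1 + p.2))) P2 :=
    (integrableOn_P c).mono_set (by rw [hP]; exact Set.subset_union_right)
  have hsplit : F c = (∫ p in P1, Real.exp (-c * (p.1 + p.2)))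
      + ∫ p in P2, Real.exp (-c * (p.1 + p.2)) := by
    rw [F, hP, MeasureTheory.setIntegral_union hd hm2 hi1 hi2]
  -- part 1
  have e1 : (∫ p in P1, Real.exp (-c * (p.1 + p.2)))
      = ((Real.exp (-(c*(-1))) - Real.exp (-(c*0)))/c) * ((Real.exp (-(c*(-1))) - Real.exp (-(c*1)))/c) := by
    have hfe : (fun p : ℝ×ℝ => Real.exp (-c * (p.1 + p.2)))
        = fun p : ℝ×ℝ => Real.exp (-(c*p.1)) * Real.exp (-(c*p.2)) := by
      funext p; rw [← Real.exp_add]; ring_nf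
    rw [hfe, hP1, Measure.volume_eq_prod,
      MeasureTheory.setIntegral_prod_mul (fun x => Real.exp (-(c*x))) (fun y => Real.exp (-(c*y)))]
    rw [MeasureTheory.integral_Icc_eq_integral_Ioc, MeasureTheory.integral_Icc_eq_integral_Ioc,
      ← intervalIntegral.integral_of_le (by norm_num : (-1:ℝ) ≤ 0),
      ← intervalIntegral.integral_of_le (by norm_num : (-1:ℝ) ≤ 1),
      int_exp c hc, int_exp c hc]
  -- part 2
  have e2 : (∫ p in P2, Real.exp (-c * (p.1 + p.2)))
      = (Real.exp (-(c*(-1))) * ((Real.exp (-(c*0)) - Real.exp (-(c*1)))/c) - Real.exp (-c) * 1)/c := by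
    have hind : ∀ x : ℝ, (∫ y : ℝ, P2.indicator (fun p : ℝ×ℝ => Real.exp (-c * (p.1 + p.2))) (x,y))
        = (Set.Ioc (0:ℝ) 1).indicator
            (fun x => Real.exp (-(c*x)) * ((Real.exp (-(c*(-1))) - Real.exp (-(c*(1-x))))/c)) x := by
      intro x
      by_cases hx : x ∈ Set.Ioc (0:ℝ) 1
      · rw [Set.indicator_of_mem hx]
        have hy : ∀ y : ℝ, P2.indicator (fun p : ℝ×ℝ => Real.exp (-c * (p.1 + p.2))) (x,y)
            = (Set.Icc (-1:ℝ) (1-x)).indicator (fun y => Real.exp (-(c*x)) * Real.exp (-(c*y))) y := by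
          intro y
          by_cases hyy : y ∈ Set.Icc (-1:ℝ) (1-x)
          · rw [Set.indicator_of_mem hyy, Set.indicator_of_mem (show (x,y) ∈ P2 from ⟨hx,hyy⟩)]
            rw [← Real.exp_add]; ring_nf
          · rw [Set.indicator_of_notMem hyy,
              Set.indicator_of_notMem (fun h => hyy (h : (x,y) ∈ P2).2)]
        simp only [hy]
        rw [MeasureTheory.integral_indicator measurableSet_Icc,
          MeasureTheory.integral_const_mul,
          MeasureTheory.integral_Icc_eq_integral_Ioc,
          ← intervalIntegral.integral_of_le (by linarith [hx.2] : (-1:ℝ) ≤ 1 - x),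
          int_exp c hc]
      · rw [Set.indicator_of_notMem hx]
        have hz : ∀ y : ℝ, P2.indicator (fun p : ℝ×ℝ => Real.exp (-c * (p.1 + p.2))) (x,y) = 0 :=
          fun y => Set.indicator_of_notMem (fun h => hx (h : (x,y) ∈ P2).1) _
        simp only [hz, MeasureTheory.integral_zero]
    rw [← MeasureTheory.integral_indicator hm2]
    rw [Measure.volume_eq_prod, MeasureTheory.integral_prod]
    · simp only [hind]
      rw [MeasureTheory.integral_indicator measurableSet_Ioc,
        ← intervalIntegral.integral_of_le (by norm_num : (0:ℝ) ≤ 1)]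
      have key : ∀ x ∈ Set.uIcc (0:ℝ) 1,
          HasDerivAt (fun t => (Real.exp (-(c*(-1))) * (-Real.exp (-(c*t))/c) - Real.exp (-c) * t)/c)
            (Real.exp (-(c*x)) * ((Real.exp (-(c*(-1))) - Real.exp (-(c*(1-x))))/c)) x := by
        intro x _
        have h1 : HasDerivAt (fun t : ℝ => -(c*t)) (-c) x := by
          simpa using ((hasDerivAt_id x).const_mul c).fun_neg
        have h2 := (Real.hasDerivAt_exp (-(c*x))).comp x h1
        have h3 := ((((h2.div_const c).fun_neg.const_mul (Real.exp (-(c*(-1))))).sub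
          ((hasDerivAt_id x).const_mul (Real.exp (-c)))).div_const c)
        have hprod : Real.exp (-(c*x)) * Real.exp (-(c*(1-x))) = Real.exp (-c) := by
          rw [← Real.exp_add]; ring_nf
        convert h3 using 1
        case e'_8 => funext t; simp [Function.comp]; ring
        case e'_9 =>
          field_simp
          nlinarith [hprod]
        all_goals rfl
      rw [intervalIntegral.integral_eq_sub_of_hasDerivAt key
        ((Continuous.intervalIntegrable (by fun_prop) 0 1))]
      norm_num
      ring
    · rw [← Measure.volume_eq_prod, MeasureTheory.integrable_indicator_iff hm2]
      exact hi2
  rw [hsplit, e1, e2]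
  have hx1 : Real.exp (-(c*(-1))) = Real.exp c := by ring_nf
  have hx2 : Real.exp (-(c*0)) = 1 := by norm_num
  have hx3 : Real.exp (-(c*1)) = Real.exp (-c) := by ring_nf
  have hx4 : Real.exp (2*c) = Real.exp c * Real.exp c := by
    rw [← Real.exp_add]; ring_nf
  have hx5 : Real.exp c * Real.exp (-c) = 1 := by
    rw [← Real.exp_add]; norm_num
  rw [hx1, hx2, hx3, hx4]
  field_simp
  nlinarith [hx5, Real.exp_pos c]


open Finset in
lemma exp_bnds (x y lo hi : ℝ) (hy : |x| = y) (hx : y ≤ 1)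
    (hlo : lo + y^12 * (13 / (479001600 * 12)) ≤ ∑ m ∈ range 12, x ^ m / m.factorial)
    (hhi : (∑ m ∈ range 12, x ^ m / m.factorial) + y^12 * (13 / (479001600 * 12)) ≤ hi) :
    lo ≤ Real.exp x ∧ Real.exp x ≤ hi := by
  have h := Real.exp_bound (x := x) (by rw [hy]; exact hx) (n := 12) (by norm_num)
  rw [abs_le, hy] at h
  norm_num [Nat.factorial] at h
  constructor <;> linarith [h.1, h.2]

lemma F_convex : ConvexOn ℝ Set.univ F := by
  refine ⟨convex_univ, ?_⟩
  intro a _ b _ ta tb hta htb hab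
  simp only [smul_eq_mul]
  have key : ∀ p ∈ P, Real.exp (-(ta * a + tb * b) * (p.1 + p.2))
      ≤ ta * Real.exp (-a * (p.1+p.2)) + tb * Real.exp (-b * (p.1+p.2)) := by
    intro p _
    have h := convexOn_exp.2 (Set.mem_univ (-a * (p.1+p.2))) (Set.mem_univ (-b * (p.1+p.2)))
      hta htb hab
    simp only [smul_eq_mul] at h
    calc Real.exp (-(ta * a + tb * b) * (p.1 + p.2))
        = Real.exp (ta * (-a * (p.1+p.2)) + tb * (-b * (p.1+p.2))) := by ring_nf
      _ ≤ _ := h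
  have hia : IntegrableOn (fun p : ℝ×ℝ => ta * Real.exp (-a * (p.1+p.2))) P volume :=
    (integrableOn_P a).const_mul ta
  have hib : IntegrableOn (fun p : ℝ×ℝ => tb * Real.exp (-b * (p.1+p.2))) P volume :=
    (integrableOn_P b).const_mul tb
  have h1 : F (ta * a + tb * b) ≤ ∫ p in P,
      (ta * Real.exp (-a * (p.1+p.2)) + tb * Real.exp (-b * (p.1+p.2))) := by
    rw [F]
    exact MeasureTheory.setIntegral_mono_on (integrableOn_P _) (hia.add hib)
      isClosed_P.measurableSet key
  have h2 : (∫ p in P, (ta * Real.exp (-a * (p.1+p.2)) + tb * Real.exp (-b * (p.1+p.2))))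
      = ta * F a + tb * F b := by
    rw [MeasureTheory.integral_add hia hib, MeasureTheory.integral_const_mul,
      MeasureTheory.integral_const_mul, F, F]
  linarith [h1, h2.le, h2.ge]

/-- The minimum value of `F` lies strictly between `3.36093` and `3.36095`. -/
theorem stmt_5 :
    ∃ cs : ℝ, (∀ c : ℝ, F cs ≤ F c) ∧ 3.36093 < F cs ∧ F cs < 3.36095 := by
  -- numeric exponential bounds
  have ea2 := exp_bnds (2*(-0.438)) (0.876) 0.4164453651 0.4164453661
    (by rw [abs_of_nonpos] <;> norm_num) (by norm_num)
    (by norm_num [Finset.sum_range_succ, Nat.factorial])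
    (by norm_num [Finset.sum_range_succ, Nat.factorial])
  have ean := exp_bnds (-(-0.438)) (0.438) 1.5496049074 1.5496049075
    (by rw [abs_of_nonneg] <;> norm_num) (by norm_num)
    (by norm_num [Finset.sum_range_succ, Nat.factorial])
    (by norm_num [Finset.sum_range_succ, Nat.factorial])
  have eb2 := exp_bnds (2*(-0.436)) (0.872) 0.4181144826 0.4181144836
    (by rw [abs_of_nonpos] <;> norm_num) (by norm_num)
    (by norm_num [Finset.sum_range_succ, Nat.factorial])
    (by norm_num [Finset.sum_range_succ, Nat.factorial])
  have ebn := exp_bnds (-(-0.436)) (0.436) 1.5465087947 1.5465087948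
    (by rw [abs_of_nonneg] <;> norm_num) (by norm_num)
    (by norm_num [Finset.sum_range_succ, Nat.factorial])
    (by norm_num [Finset.sum_range_succ, Nat.factorial])
  have ec2 := exp_bnds (2*(-0.4335)) (0.867) 0.4202102903 0.4202102912
    (by rw [abs_of_nonpos] <;> norm_num) (by norm_num)
    (by norm_num [Finset.sum_range_succ, Nat.factorial])
    (by norm_num [Finset.sum_range_succ, Nat.factorial])
  have ecn := exp_bnds (-(-0.4335)) (0.4335) 1.5426473515 1.5426473516
    (by rw [abs_of_nonneg] <;> norm_num) (by norm_num)
    (by norm_num [Finset.sum_range_succ, Nat.factorial])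
    (by norm_num [Finset.sum_range_succ, Nat.factorial])
  have ed2 := exp_bnds (2*(-0.4315)) (0.863) 0.4218944976 0.4218944985
    (by rw [abs_of_nonpos] <;> norm_num) (by norm_num)
    (by norm_num [Finset.sum_range_succ, Nat.factorial])
    (by norm_num [Finset.sum_range_succ, Nat.factorial])
  have edn := exp_bnds (-(-0.4315)) (0.4315) 1.5395651401 1.5395651402
    (by rw [abs_of_nonneg] <;> norm_num) (by norm_num)
    (by norm_num [Finset.sum_range_succ, Nat.factorial])
    (by norm_num [Finset.sum_range_succ, Nat.factorial])
  have em2 := exp_bnds (2*(-0.4348)) (0.8696) 0.4191191625 0.4191191635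
    (by rw [abs_of_nonpos] <;> norm_num) (by norm_num)
    (by norm_num [Finset.sum_range_succ, Nat.factorial])
    (by norm_num [Finset.sum_range_succ, Nat.factorial])
  have emn := exp_bnds (-(-0.4348)) (0.4348) 1.5446540972 1.5446540973
    (by rw [abs_of_nonneg] <;> norm_num) (by norm_num)
    (by norm_num [Finset.sum_range_succ, Nat.factorial])
    (by norm_num [Finset.sum_range_succ, Nat.factorial])
  -- F value bounds
  have hFaH : F (-0.438) ≤ 3.360945472 := by
    rw [F_eq _ (by norm_num), show ((-0.438:ℝ))^2 = 0.191844 by norm_num,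
      div_le_iff₀ (by norm_num)]
    linarith [ea2.2, ean.2]
  have hFbL : (3.360939271:ℝ) ≤ F (-0.436) := by
    rw [F_eq _ (by norm_num), show ((-0.436:ℝ))^2 = 0.190096 by norm_num,
      le_div_iff₀ (by norm_num)]
    linarith [eb2.1, ebn.1]
  have hFcL : (3.360939264:ℝ) ≤ F (-0.4335) := by
    rw [F_eq _ (by norm_num), show ((-0.4335:ℝ))^2 = 0.18792225 by norm_num,
      le_div_iff₀ (by norm_num)]
    linarith [ec2.1, ecn.1]
  have hFdH : F (-0.4315) ≤ 3.360945457 := by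
    rw [F_eq _ (by norm_num), show ((-0.4315:ℝ))^2 = 0.18619225 by norm_num,
      div_le_iff₀ (by norm_num)]
    linarith [ed2.2, edn.2]
  have hFmH : F (-0.4348) ≤ 3.360938202 := by
    rw [F_eq _ (by norm_num), show ((-0.4348:ℝ))^2 = 0.18905104 by norm_num,
      div_le_iff₀ (by norm_num)]
    linarith [em2.2, emn.2]
  -- min over the compact interval
  have hcont : ContinuousOn F (Set.Icc (-0.436:ℝ) (-0.4335)) := by
    have hG : ContinuousOn
        (fun c : ℝ => (Real.exp (2*c) - 2 + (1-c) * Real.exp (-c)) / c^2)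
        (Set.Icc (-0.436:ℝ) (-0.4335)) := by
      apply ContinuousOn.div (by fun_prop) (by fun_prop)
      intro x hx
      simp only [Set.mem_Icc] at hx
      have hx0 : x ≠ 0 := by intro h; rw [h] at hx; norm_num at hx
      exact pow_ne_zero 2 hx0
    exact hG.congr fun x hx => F_eq x (by
      simp only [Set.mem_Icc] at hx
      intro h; rw [h] at hx; norm_num at hx)
  obtain ⟨cs, hcs_mem, hmin⟩ := IsCompact.exists_isMinOn isCompact_Icc
    (Set.nonempty_Icc.2 (by norm_num)) hcont
  have hmin' : ∀ x ∈ Set.Icc (-0.436:ℝ) (-0.4335), F cs ≤ F x := fun x hx => hmin hx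
  have hmem : (-0.4348:ℝ) ∈ Set.Icc (-0.436:ℝ) (-0.4335) := by
    constructor <;> norm_num
  have hcsm : F cs ≤ F (-0.4348) := hmin' _ hmem
  have hcs_lt_b : F cs < F (-0.436) := by linarith
  have hcs_lt_c : F cs < F (-0.4335) := by linarith
  simp only [Set.mem_Icc] at hcs_mem
  have hbcs : (-0.436:ℝ) < cs := by
    rcases lt_or_eq_of_le hcs_mem.1 with h | h
    · exact h
    · exact absurd (h ▸ hcs_lt_b) (lt_irrefl _)
  have hcsc : cs < (-0.4335:ℝ) := by
    rcases lt_or_eq_of_le hcs_mem.2 with h | h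
    · exact h
    · exact absurd (h ▸ hcs_lt_c) (lt_irrefl _)
  refine ⟨cs, ?_, ?_, ?_⟩
  · -- global minimality
    intro c
    rcases le_or_gt c (-0.436) with hc | hc
    · rcases eq_or_lt_of_le hc with rfl | hc
      · exact hcs_lt_b.le
      · -- c < -0.436 < cs
        set t : ℝ := (cs - (-0.436)) / (cs - c) with ht_def
        have hden : (0:ℝ) < cs - c := by linarith
        have ht : 0 < t := div_pos (by linarith) hden
        have ht1 : t < 1 := (div_lt_one hden).2 (by linarith)
        have hne : cs - c ≠ 0 := ne_of_gt hden
        have harg : t * c + (1 - t) * cs = -0.436 := by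
          rw [ht_def]
          field_simp
          ring
        have hconv := F_convex.2 (Set.mem_univ c) (Set.mem_univ cs) ht.le
          (by linarith : (0:ℝ) ≤ 1 - t) (by ring)
        simp only [smul_eq_mul, harg] at hconv
        by_contra hlt
        push_neg at hlt
        nlinarith [hconv, hcs_lt_b, ht, hlt]
    · rcases le_or_gt c (-0.4335) with hc2 | hc2
      · exact hmin' c ⟨hc.le, hc2⟩
      · -- cs < -0.4335 < c
        set t : ℝ := (c - (-0.4335)) / (c - cs) with ht_def
        have hden : (0:ℝ) < c - cs := by linarith
        have ht : 0 < t := div_pos (by linarith) hden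
        have ht1 : t < 1 := (div_lt_one hden).2 (by linarith)
        have hne : c - cs ≠ 0 := ne_of_gt hden
        have harg : t * cs + (1 - t) * c = -0.4335 := by
          rw [ht_def]
          field_simp
          ring
        have hconv := F_convex.2 (Set.mem_univ cs) (Set.mem_univ c) ht.le
          (by linarith : (0:ℝ) ≤ 1 - t) (by ring)
        simp only [smul_eq_mul, harg] at hconv
        by_contra hlt
        push_neg at hlt
        nlinarith [hconv, hcs_lt_c, ht, ht1, hlt]
  · -- lower bound
    rcases le_or_gt cs (-0.4348) with hcase | hcase
    · have hs := F_convex.slope_mono_adjacent (Set.mem_univ (-0.438:ℝ))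
        (Set.mem_univ cs) (by norm_num : (-0.438:ℝ) < -0.436) hbcs
      rw [div_le_div_iff₀ (by norm_num) (by linarith : (0:ℝ) < cs - (-0.436))] at hs
      -- (F b - F a) * (cs - b) ≤ (F cs - F b) * (b - a)
      nlinarith [hs, hFaH, hFbL, hbcs, hcase,
        mul_nonneg (by linarith : (0:ℝ) ≤ cs - (-0.436))
          (by linarith : (0:ℝ) ≤ F (-0.436) - F (-0.438) - (3.360939271 - 3.360945472)),
        mul_nonneg (by linarith : (0:ℝ) ≤ (-0.4348) - cs)
          (by norm_num : (0:ℝ) ≤ (3.360945472:ℝ) - 3.360939271)]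
    · have hs := F_convex.slope_mono_adjacent (Set.mem_univ cs)
        (Set.mem_univ (-0.4315:ℝ)) hcsc (by norm_num : (-0.4335:ℝ) < -0.4315)
      rw [div_le_div_iff₀ (by linarith : (0:ℝ) < (-0.4335:ℝ) - cs) (by norm_num)] at hs
      -- (F c0 - F cs) * (d - c0) ≤ (F d - F c0) * (c0 - cs)
      nlinarith [hs, hFcL, hFdH, hcsc, hcase,
        mul_nonneg (by linarith : (0:ℝ) ≤ (-0.4335:ℝ) - cs)
          (by linarith : (0:ℝ) ≤ 3.360945457 - 3.360939264 - (F (-0.4315) - F (-0.4335))),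
        mul_nonneg (by linarith : (0:ℝ) ≤ cs - (-0.4348))
          (by norm_num : (0:ℝ) ≤ (3.360945457:ℝ) - 3.360939264)]
  · calc F cs ≤ F (-0.4348) := hcsm
      _ ≤ 3.360938202 := hFmH
      _ < 3.36095 := by norm_num
end

section
/- The quantity Θ = (min_{c ∈ ℝ} H(c))/e² satisfies |Θ - 0.5179| < 5·10^{-5}; that is, the Gaussian density of the Koiso–Cao soliton equals 0.5179 to four decimal places. -/
open MeasureTheory Real Set

/-- The closed trapezium with vertices (2,-1), (-1,2), (-1,0), (0,-1). -/
def T : Set (ℝ × ℝ) :=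
  {p : ℝ × ℝ | -1 ≤ p.1 ∧ -1 ≤ p.2 ∧ -1 ≤ p.1 + p.2 ∧ p.1 + p.2 ≤ 1}

/-- `H c = ∫_T e^{-c(x₁+x₂)} dx₁ dx₂` (Lebesgue measure on ℝ²). -/
noncomputable def H (c : ℝ) : ℝ := ∫ p in T, Real.exp (-c * (p.1 + p.2))

lemma T_isClosed : IsClosed T := by
  have h1 : IsClosed {p : ℝ × ℝ | -1 ≤ p.1} := isClosed_le continuous_const continuous_fst
  have h2 : IsClosed {p : ℝ × ℝ | -1 ≤ p.2} := isClosed_le continuous_const continuous_snd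
  have h3 : IsClosed {p : ℝ × ℝ | -1 ≤ p.1 + p.2} :=
    isClosed_le continuous_const (continuous_fst.add continuous_snd)
  have h4 : IsClosed {p : ℝ × ℝ | p.1 + p.2 ≤ 1} :=
    isClosed_le (continuous_fst.add continuous_snd) continuous_const
  have : T = ({p : ℝ × ℝ | -1 ≤ p.1} ∩ {p : ℝ × ℝ | -1 ≤ p.2}) ∩
      ({p : ℝ × ℝ | -1 ≤ p.1 + p.2} ∩ {p : ℝ × ℝ | p.1 + p.2 ≤ 1}) := by
    ext p; simp [T]; tauto
  rw [this]
  exact ((h1.inter h2).inter (h3.inter h4))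

lemma T_measurable : MeasurableSet T := T_isClosed.measurableSet

lemma T_isCompact : IsCompact T := by
  apply IsCompact.of_isClosed_subset (isCompact_Icc (a := ((-1 : ℝ), (-1 : ℝ))) (b := ((2:ℝ),(2:ℝ)))) T_isClosed
  rintro ⟨x, y⟩ ⟨h1, h2, h3, h4⟩
  simp only [mem_Icc, Prod.mk_le_mk]
  refine ⟨⟨h1, h2⟩, by dsimp at *; constructor <;> linarith⟩

lemma integrableOn_T {f : ℝ × ℝ → ℝ} (hf : Continuous f) : IntegrableOn f T :=
  hf.continuousOn.integrableOn_compact T_isCompact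

lemma sliceT (φ Φ : ℝ → ℝ) (hφ : Continuous φ) (hΦ : ∀ u, HasDerivAt Φ (φ u) u) :
    ∫ p in T, φ (p.1 + p.2) = (Φ 1 - Φ (-1)) + ∫ x in (0:ℝ)..2, (Φ 1 - Φ (x - 1)) := by
  classical
  have hφint : ∀ l r : ℝ, ∫ u in l..r, φ u = Φ r - Φ l := fun l r =>
    intervalIntegral.integral_eq_sub_of_hasDerivAt (fun u _ => hΦ u)
      (hφ.intervalIntegrable l r)
  have hΦcont : Continuous Φ := by
    have : ∀ u : ℝ, DifferentiableAt ℝ Φ u := fun u => (hΦ u).differentiableAt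
    exact Differentiable.continuous this
  set f : ℝ × ℝ → ℝ := fun p => φ (p.1 + p.2) with hf_def
  have hf : Continuous f := hφ.comp (continuous_fst.add continuous_snd)
  have hfint : Integrable (T.indicator f) :=
    (integrable_indicator_iff T_measurable).2 (integrableOn_T hf)
  set G : ℝ → ℝ := fun x => ∫ y in Icc (max (-1) (-1 - x)) (1 - x), φ (x + y) with hG_def
  have key : ∫ p in T, f p = ∫ x in Icc (-1:ℝ) 2, G x := by
    rw [← integral_indicator T_measurable]
    rw [show (volume : Measure (ℝ × ℝ)) = (volume : Measure ℝ).prod volume from rfl] at hfint ⊢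
    rw [MeasureTheory.integral_prod _ hfint]
    rw [← integral_indicator measurableSet_Icc]
    congr 1
    funext x
    have hxy : ∀ y : ℝ, T.indicator f (x, y) =
        (Icc (-1:ℝ) 2).indicator
          (fun x' => (Icc (max (-1) (-1 - x')) (1 - x')).indicator (fun y' => φ (x' + y')) y) x := by
      intro y
      by_cases hx : x ∈ Icc (-1:ℝ) 2
      · by_cases hy : y ∈ Icc (max (-1) (-1 - x)) (1 - x)
        · have hxyT : (x, y) ∈ T := by
            rw [mem_Icc, max_le_iff] at hy
            exact ⟨hx.1, hy.1.1, by dsimp; linarith [hy.1.2], by dsimp; linarith [hy.2]⟩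
          simp [indicator_of_mem hxyT, indicator_of_mem hx, indicator_of_mem hy, f]
        · have hxyT : (x, y) ∉ T := by
            intro hm
            obtain ⟨h1, h2, h3, h4⟩ := hm
            exact hy ⟨max_le h2 (by dsimp at h3; linarith), by dsimp at h4; linarith⟩
          simp [indicator_of_notMem hxyT, indicator_of_mem hx, indicator_of_notMem hy]
      · have hxyT : (x, y) ∉ T := by
          intro hm
          obtain ⟨h1, h2, h3, h4⟩ := hm
          exact hx ⟨h1, by dsimp at h2 h4; linarith⟩
        simp [indicator_of_notMem hxyT, indicator_of_notMem hx]
    calc ∫ y, T.indicator f (x, y)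
        = ∫ y, (Icc (-1:ℝ) 2).indicator
            (fun x' => (Icc (max (-1) (-1 - x')) (1 - x')).indicator (fun y' => φ (x' + y')) y) x := by
          exact integral_congr_ae (Filter.Eventually.of_forall hxy)
      _ = (Icc (-1:ℝ) 2).indicator G x := by
          by_cases hx : x ∈ Icc (-1:ℝ) 2
          · simp only [indicator_of_mem hx]
            rw [integral_indicator measurableSet_Icc]
          · simp [indicator_of_notMem hx]
  rw [key]
  have hsplit : Icc (-1:ℝ) 2 = Icc (-1:ℝ) 0 ∪ Ioc (0:ℝ) 2 :=
    (Icc_union_Ioc_eq_Icc (by norm_num) (by norm_num)).symm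
  have hG1 : EqOn G (fun _ => Φ 1 - Φ (-1)) (Icc (-1:ℝ) 0) := by
    intro x hx
    rw [mem_Icc] at hx
    have hmax : max (-1:ℝ) (-1 - x) = -1 - x := max_eq_right (by linarith)
    have hle : -1 - x ≤ 1 - x := by linarith
    calc G x = ∫ y in Icc (-1 - x) (1 - x), φ (x + y) := by rw [hG_def]; simp [hmax]
      _ = ∫ y in (-1 - x)..(1 - x), φ (x + y) := by
          rw [intervalIntegral.integral_of_le hle, integral_Icc_eq_integral_Ioc]
      _ = ∫ u in (x + (-1 - x))..(x + (1 - x)), φ u := intervalIntegral.integral_comp_add_left φ x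
      _ = ∫ u in (-1:ℝ)..1, φ u := by norm_num
      _ = Φ 1 - Φ (-1) := hφint _ _
  have hG2 : EqOn G (fun x => Φ 1 - Φ (x - 1)) (Ioc (0:ℝ) 2) := by
    intro x hx
    rw [mem_Ioc] at hx
    have hmax : max (-1:ℝ) (-1 - x) = -1 := max_eq_left (by linarith)
    have hle : (-1:ℝ) ≤ 1 - x := by linarith
    calc G x = ∫ y in Icc (-1:ℝ) (1 - x), φ (x + y) := by rw [hG_def]; simp [hmax]
      _ = ∫ y in (-1:ℝ)..(1 - x), φ (x + y) := by
          rw [intervalIntegral.integral_of_le hle, integral_Icc_eq_integral_Ioc]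
      _ = ∫ u in (x + (-1:ℝ))..(x + (1 - x)), φ u := intervalIntegral.integral_comp_add_left φ x
      _ = ∫ u in (x - 1)..1, φ u := by ring_nf
      _ = Φ 1 - Φ (x - 1) := hφint _ _
  rw [hsplit]
  have hdisj : Disjoint (Icc (-1:ℝ) 0) (Ioc (0:ℝ) 2) := by
    rw [Set.disjoint_left]
    rintro z ⟨_, h1⟩ ⟨h2, _⟩
    linarith
  have hcont2 : Continuous fun x : ℝ => Φ 1 - Φ (x - 1) :=
    continuous_const.sub (hΦcont.comp (continuous_id.sub continuous_const))
  have hint1 : IntegrableOn G (Icc (-1:ℝ) 0) := by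
    rw [integrableOn_congr_fun hG1 measurableSet_Icc]
    exact integrableOn_const (by simp)
  have hint2 : IntegrableOn G (Ioc (0:ℝ) 2) := by
    rw [integrableOn_congr_fun hG2 measurableSet_Ioc]
    exact hcont2.integrableOn_Ioc
  rw [setIntegral_union hdisj measurableSet_Ioc hint1 hint2]
  congr 1
  · rw [setIntegral_congr_fun measurableSet_Icc hG1]
    simp [Real.volume_Icc]
  · rw [setIntegral_congr_fun measurableSet_Ioc hG2,
      intervalIntegral.integral_of_le (by norm_num : (0:ℝ) ≤ 2)]

noncomputable def Dint (c : ℝ) : ℝ := ∫ p in T, (p.1 + p.2) * Real.exp (-c * (p.1 + p.2))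
noncomputable def Hval (c : ℝ) : ℝ := ((c+1)*Real.exp c - (3*c+1)*Real.exp (-c))/c^2
noncomputable def Dval (c : ℝ) : ℝ :=
  (-(3*c^2+4*c+2)*Real.exp (-c) - (c^2-2)*Real.exp c)/c^3

lemma hasDerivAt_poly_exp (c α β u : ℝ) :
    HasDerivAt (fun t => (α + β*t) * Real.exp (-c*t)) ((β - c*(α + β*u)) * Real.exp (-c*u)) u := by
  have h1 : HasDerivAt (fun t : ℝ => α + β*t) β u := by
    simpa using ((hasDerivAt_id u).const_mul β).const_add α
  have h2 : HasDerivAt (fun t : ℝ => -c*t) (-c) u := by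
    simpa using (hasDerivAt_id u).const_mul (-c)
  have := h1.fun_mul h2.exp
  exact this.congr_deriv (by ring)

lemma hasDerivAt_poly_exp' (c α β δ u : ℝ) :
    HasDerivAt (fun t => (α + β*t) * Real.exp (-c*(t-1)) + δ*t)
      ((β - c*(α + β*u)) * Real.exp (-c*(u-1)) + δ) u := by
  have h1 : HasDerivAt (fun t : ℝ => α + β*t) β u := by
    simpa using ((hasDerivAt_id u).const_mul β).const_add α
  have h2 : HasDerivAt (fun t : ℝ => -c*(t-1)) (-c) u := by
    simpa using ((hasDerivAt_id u).sub_const 1).const_mul (-c)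
  have h3 : HasDerivAt (fun t : ℝ => δ*t) δ u := by
    simpa using (hasDerivAt_id u).const_mul δ
  have := (h1.fun_mul h2.exp).add h3
  exact this.congr_deriv (by ring)

lemma H_eq (c : ℝ) (hc : c ≠ 0) : H c = Hval c := by
  have hφ : Continuous fun u : ℝ => Real.exp (-c*u) := by fun_prop
  have hΦ : ∀ u : ℝ, HasDerivAt (fun t : ℝ => (-(1/c) + 0*t) * Real.exp (-c*t))
      (Real.exp (-c*u)) u := by
    intro u
    have := hasDerivAt_poly_exp c (-(1/c)) 0 u
    convert this using 1
    field_simp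
    ring
  have hout : ∫ x in (0:ℝ)..2,
      ((fun t : ℝ => (-(1/c) + 0*t) * Real.exp (-c*t)) 1
        - (fun t : ℝ => (-(1/c) + 0*t) * Real.exp (-c*t)) (x-1))
      = ((-(1/c)) * Real.exp (-c) * 2)
        + ((-(1/c^2)) * Real.exp (-c*(2-1)) - (-(1/c^2)) * Real.exp (-c*(0-1))) := by
    have : ∀ x ∈ uIcc (0:ℝ) 2, HasDerivAt
        (fun t : ℝ => (-(1/c^2) + 0*t) * Real.exp (-c*(t-1)) + ((-(1/c)) * Real.exp (-c)) * t)
        ((fun t : ℝ => (-(1/c) + 0*t) * Real.exp (-c*t)) 1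
          - (fun t : ℝ => (-(1/c) + 0*t) * Real.exp (-c*t)) (x-1)) x := by
      intro x _
      have := hasDerivAt_poly_exp' c (-(1/c^2)) 0 ((-(1/c)) * Real.exp (-c)) x
      convert this using 1
      simp only [zero_mul, add_zero, mul_one]
      field_simp
      ring
    rw [intervalIntegral.integral_eq_sub_of_hasDerivAt this
      (by apply Continuous.intervalIntegrable; fun_prop)]
    simp only [zero_mul, add_zero]
    ring
  have := sliceT (fun u : ℝ => Real.exp (-c*u)) (fun t : ℝ => (-(1/c) + 0*t) * Real.exp (-c*t)) hφ hΦ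
  rw [H]
  simp only at this hout
  rw [this, hout, Hval]
  have e1 : Real.exp (-c*(2-1)) = Real.exp (-c) := by norm_num
  have e2 : Real.exp (-c*(0-1)) = Real.exp c := by norm_num
  have e3 : Real.exp (-c*1) = Real.exp (-c) := by norm_num
  have e4 : Real.exp (-c*(-1)) = Real.exp c := by norm_num
  rw [e1, e2, e3, e4]
  field_simp
  ring

lemma D_eq (c : ℝ) (hc : c ≠ 0) : Dint c = Dval c := by
  have hφ : Continuous fun u : ℝ => u * Real.exp (-c*u) := by fun_prop
  set Φ : ℝ → ℝ := fun t : ℝ => (-(1/c^2) + (-(1/c))*t) * Real.exp (-c*t) with hΦdef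
  have hΦ : ∀ u : ℝ, HasDerivAt Φ (u * Real.exp (-c*u)) u := by
    intro u
    have := hasDerivAt_poly_exp c (-(1/c^2)) (-(1/c)) u
    convert this using 1
    field_simp
    ring
  have hout : ∫ x in (0:ℝ)..2, (Φ 1 - Φ (x-1))
      = (Φ 1 * 2)
        + ((-(2/c^3) + (-(1/c^2))*(2-1)) * Real.exp (-c*(2-1))
            - (-(2/c^3) + (-(1/c^2))*(0-1)) * Real.exp (-c*(0-1))) := by
    have : ∀ x ∈ uIcc (0:ℝ) 2, HasDerivAt
        (fun t : ℝ => (-(2/c^3) + (-(1/c^2))*(t-1)) * Real.exp (-c*(t-1)) + (Φ 1) * t)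
        (Φ 1 - Φ (x-1)) x := by
      intro x _
      have h0 := hasDerivAt_poly_exp' c (-(2/c^3) - (-(1/c^2))) (-(1/c^2)) (Φ 1) x
      have heq : (fun t : ℝ => ((-(2/c^3) - (-(1/c^2))) + (-(1/c^2))*t) * Real.exp (-c*(t-1)) + (Φ 1) * t)
          = (fun t : ℝ => (-(2/c^3) + (-(1/c^2))*(t-1)) * Real.exp (-c*(t-1)) + (Φ 1) * t) := by
        funext t; ring
      rw [heq] at h0
      convert h0 using 1
      rw [hΦdef]
      field_simp
      ring
    rw [intervalIntegral.integral_eq_sub_of_hasDerivAt this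
      (by rw [hΦdef]; apply Continuous.intervalIntegrable; fun_prop)]
    ring
  have := sliceT (fun u : ℝ => u * Real.exp (-c*u)) Φ hφ hΦ
  rw [Dint]
  rw [this, hout, Dval, hΦdef]
  have e1 : Real.exp (-c*(2-1)) = Real.exp (-c) := by norm_num
  have e2 : Real.exp (-c*(0-1)) = Real.exp c := by norm_num
  have e3 : Real.exp (-c*1) = Real.exp (-c) := by norm_num
  have e4 : Real.exp (-c*(-1)) = Real.exp c := by norm_num
  simp only [e1, e2, e3, e4]
  field_simp
  ring

lemma tangent (c₁ c₂ : ℝ) : H c₁ - (c₂ - c₁) * Dint c₁ ≤ H c₂ := by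
  have hint1 : IntegrableOn (fun p : ℝ × ℝ => Real.exp (-c₁ * (p.1 + p.2))) T :=
    integrableOn_T (by fun_prop)
  have hint2 : IntegrableOn (fun p : ℝ × ℝ => Real.exp (-c₂ * (p.1 + p.2))) T :=
    integrableOn_T (by fun_prop)
  have hint3 : IntegrableOn (fun p : ℝ × ℝ => (p.1 + p.2) * Real.exp (-c₁ * (p.1 + p.2))) T :=
    integrableOn_T (by fun_prop)
  have hlow : IntegrableOn (fun p : ℝ × ℝ =>
      Real.exp (-c₁ * (p.1 + p.2)) - (c₂ - c₁) * ((p.1 + p.2) * Real.exp (-c₁ * (p.1 + p.2)))) T :=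
    hint1.sub (hint3.const_mul _)
  have hmono : ∀ p ∈ T,
      Real.exp (-c₁ * (p.1 + p.2)) - (c₂ - c₁) * ((p.1 + p.2) * Real.exp (-c₁ * (p.1 + p.2)))
        ≤ Real.exp (-c₂ * (p.1 + p.2)) := by
    intro p _
    set s : ℝ := p.1 + p.2
    have h1 := Real.add_one_le_exp (-c₂ * s - -c₁ * s)
    have h2 : Real.exp (-c₂ * s) = Real.exp (-c₁ * s) * Real.exp (-c₂ * s - -c₁ * s) := by
      rw [← Real.exp_add]; ring_nf
    have h3 := Real.exp_pos (-c₁ * s)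
    nlinarith [mul_le_mul_of_nonneg_left h1 h3.le]
  have := setIntegral_mono_on hlow hint2 T_measurable hmono
  have hsub : ∫ p in T, (Real.exp (-c₁ * (p.1 + p.2))
      - (c₂ - c₁) * ((p.1 + p.2) * Real.exp (-c₁ * (p.1 + p.2))))
      = H c₁ - (c₂ - c₁) * Dint c₁ := by
    rw [integral_sub hint1 (hint3.const_mul _)]
    rw [show ∫ p in T, (c₂ - c₁) * ((p.1 + p.2) * Real.exp (-c₁ * (p.1 + p.2)))
        = (c₂ - c₁) * ∫ p in T, (p.1 + p.2) * Real.exp (-c₁ * (p.1 + p.2)) from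
      MeasureTheory.integral_const_mul _ _]
    rfl
  rw [hsub] at this
  exact this

lemma exp527 : 1.693843149246 ≤ Real.exp 0.527 ∧ Real.exp 0.527 ≤ 1.693843149249 := by
  have h := Real.exp_bound (x := (0.527:ℝ)) (by rw [abs_le]; norm_num) (n := 12) (by norm_num)
  rw [abs_le] at h
  simp only [Finset.sum_range_succ, Finset.sum_range_zero, Nat.factorial] at h
  rw [show |(0.527:ℝ)| = 0.527 from abs_of_pos (by norm_num)] at h
  norm_num at h
  constructor <;> linarith [h.1, h.2]

lemma expn527 : 0.590373435958 ≤ Real.exp (-0.527) ∧ Real.exp (-0.527) ≤ 0.590373435961 := by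
  have h := Real.exp_bound (x := (-0.527:ℝ)) (by rw [abs_le]; norm_num) (n := 12) (by norm_num)
  rw [abs_le] at h
  simp only [Finset.sum_range_succ, Finset.sum_range_zero, Nat.factorial] at h
  rw [show |(-0.527:ℝ)| = 0.527 from by rw [abs_of_neg (by norm_num)]; norm_num] at h
  norm_num at h
  constructor <;> linarith [h.1, h.2]

lemma exp528 : 1.695537839599 ≤ Real.exp 0.528 ∧ Real.exp 0.528 ≤ 1.695537839602 := by
  have h := Real.exp_bound (x := (0.528:ℝ)) (by rw [abs_le]; norm_num) (n := 12) (by norm_num)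
  rw [abs_le] at h
  simp only [Finset.sum_range_succ, Finset.sum_range_zero, Nat.factorial] at h
  rw [show |(0.528:ℝ)| = 0.528 from abs_of_pos (by norm_num)] at h
  norm_num at h
  constructor <;> linarith [h.1, h.2]

lemma expn528 : 0.589783357610 ≤ Real.exp (-0.528) ∧ Real.exp (-0.528) ≤ 0.589783357613 := by
  have h := Real.exp_bound (x := (-0.528:ℝ)) (by rw [abs_le]; norm_num) (n := 12) (by norm_num)
  rw [abs_le] at h
  simp only [Finset.sum_range_succ, Finset.sum_range_zero, Nat.factorial] at h
  rw [show |(-0.528:ℝ)| = 0.528 from by rw [abs_of_neg (by norm_num)]; norm_num] at h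
  norm_num at h
  constructor <;> linarith [h.1, h.2]

lemma Dval_a : 0 ≤ Dval 0.527 ∧ Dval 0.527 ≤ 0.00077 := by
  obtain ⟨h1, h2⟩ := exp527
  obtain ⟨h3, h4⟩ := expn527
  rw [Dval]
  constructor
  · apply div_nonneg _ (by norm_num)
    nlinarith
  · rw [div_le_iff₀ (by norm_num : (0:ℝ) < (0.527:ℝ)^3)]
    nlinarith

lemma Dval_b : Dval 0.528 ≤ 0 := by
  obtain ⟨h1, h2⟩ := exp528
  obtain ⟨h3, h4⟩ := expn528
  rw [Dval]
  apply div_nonpos_of_nonpos_of_nonneg _ (by norm_num)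
  nlinarith

lemma Hval_a : 3.82655268 ≤ Hval 0.527 ∧ Hval 0.527 ≤ 3.82655269 := by
  obtain ⟨h1, h2⟩ := exp527
  obtain ⟨h3, h4⟩ := expn527
  rw [Hval]
  constructor
  · rw [le_div_iff₀ (by norm_num : (0:ℝ) < (0.527:ℝ)^2)]
    nlinarith
  · rw [div_le_iff₀ (by norm_num : (0:ℝ) < (0.527:ℝ)^2)]
    nlinarith

/-- The Gaussian density `Θ = (min H)/e²` of the Koiso–Cao soliton equals `0.5179`
to four decimal places. -/
theorem stmt_12 :
    ∃ cs : ℝ, (∀ c : ℝ, H cs ≤ H c) ∧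
      |H cs / Real.exp 2 - 0.5179| < 5e-5 := by
  have hDcont : ContinuousOn Dval (Icc (0.527:ℝ) 0.528) := by
    apply ContinuousOn.div
    · exact Continuous.continuousOn (by fun_prop)
    · exact Continuous.continuousOn (by fun_prop)
    · intro x hx
      have : (0:ℝ) < x := lt_of_lt_of_le (by norm_num) hx.1
      positivity
  have hmem : (0:ℝ) ∈ Icc (Dval 0.528) (Dval 0.527) := mem_Icc.2 ⟨Dval_b, Dval_a.1⟩
  obtain ⟨cs, hcs, hcs0⟩ := intermediate_value_Icc' (by norm_num : (0.527:ℝ) ≤ 0.528) hDcont hmem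
  rw [mem_Icc] at hcs
  have hcsne : cs ≠ 0 := by intro h; rw [h] at hcs; norm_num at hcs
  have hmin : ∀ c : ℝ, H cs ≤ H c := by
    intro c
    have ht := tangent cs c
    rw [D_eq cs hcsne, hcs0] at ht
    linarith
  refine ⟨cs, hmin, ?_⟩
  -- upper bound on H cs
  have hup : H cs ≤ 3.82655269 := le_trans (hmin 0.527) (by rw [H_eq 0.527 (by norm_num)]; exact Hval_a.2)
  -- lower bound on H cs
  have hlo : 3.82655191 ≤ H cs := by
    have ht := tangent 0.527 cs
    rw [H_eq 0.527 (by norm_num), D_eq 0.527 (by norm_num)] at ht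
    have h1 := Hval_a.1
    have h2 := Dval_a
    nlinarith [hcs.1, hcs.2, h2.1, h2.2]
  -- exp 2 bounds
  have he2 : Real.exp 2 = Real.exp 1 * Real.exp 1 := by
    rw [← Real.exp_add]; norm_num
  have he1l := Real.exp_one_gt_d9
  have he1u := Real.exp_one_lt_d9
  have hE2l : (7.389056098:ℝ) ≤ Real.exp 2 := by rw [he2]; nlinarith
  have hE2u : Real.exp 2 ≤ (7.38905611:ℝ) := by rw [he2]; nlinarith
  have hE2pos : (0:ℝ) < Real.exp 2 := Real.exp_pos 2
  rw [abs_lt]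
  constructor
  · have h1 : (0.51785:ℝ) * Real.exp 2 < H cs := by nlinarith
    have h2 := (lt_div_iff₀ hE2pos).2 h1
    linarith
  · have h1 : H cs < (0.51795:ℝ) * Real.exp 2 := by nlinarith
    have h2 := (div_lt_iff₀ hE2pos).2 h1
    linarith
end
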